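/- With the same setup (ρ ≥ 5/log 5, N = N_ρ, B₁ = min(x₂²−2x₂, x₁/2 − √x₁)): if M is a positive integer with ben(M) < B₁ and p is a prime with x₂ ≤ p < √x₁, then v_p(M) ≤ 2. -/

import Mathlib

/-- ℓ(M): the sum of the prime powers in the standard factorization of M. -/
def ell (M : ℕ) : ℕ := ∑ p ∈ M.primeFactors, p ^ M.factorization p

/-- The benefit of M with respect to the superchampion N associated to ρ. -/
noncomputable def ben (ρ : ℝ) (N M : ℕ) : ℝ :=
  (ell M : ℝ) - (ell N : ℝ) - ρ * (Real.log M - Real.log N)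

noncomputable def gfun (ρ : ℝ) (p v : ℕ) : ℝ :=
  (if v = 0 then 0 else (p:ℝ)^v) - ρ * v * Real.log p

lemma fac_eq_zero {K p : ℕ} (hp : p ∉ K.primeFactors) : K.factorization p = 0 := by
  rw [← Nat.support_factorization] at hp
  exact Finsupp.notMem_support_iff.mp hp

lemma ell_eq_sum (S : Finset ℕ) (K : ℕ) (hS : K.primeFactors ⊆ S) :
    (ell K : ℝ) = ∑ p ∈ S, (if K.factorization p = 0 then 0 else (p:ℝ)^(K.factorization p)) := by
  have h0 : ∀ p ∈ S, p ∉ K.primeFactors →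
      (if K.factorization p = 0 then (0:ℝ) else (p:ℝ)^(K.factorization p)) = 0 := by
    intro p _ hp
    simp [fac_eq_zero hp]
  rw [← Finset.sum_subset hS h0, ell]
  push_cast
  refine Finset.sum_congr rfl fun p hp => ?_
  have : K.factorization p ≠ 0 := by
    rw [← Nat.support_factorization] at hp
    exact Finsupp.mem_support_iff.mp hp
  rw [if_neg this]

lemma log_eq_sum (S : Finset ℕ) (K : ℕ) (hK : 0 < K) (hS : K.primeFactors ⊆ S) :
    Real.log K = ∑ p ∈ S, (K.factorization p : ℝ) * Real.log p := by
  have h0 : ∀ p ∈ S, p ∉ K.primeFactors → (K.factorization p : ℝ) * Real.log p = 0 := by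
    intro p _ hp
    simp [fac_eq_zero hp]
  rw [← Finset.sum_subset hS h0]
  conv_lhs => rw [← Nat.factorization_prod_pow_eq_self hK.ne']
  rw [Finsupp.prod]
  push_cast
  rw [Real.log_prod]
  · refine Finset.sum_congr (by rw [Nat.support_factorization]) fun p hp => ?_
    rw [Real.log_pow]
  · intro p hp
    have hp2 : p.Prime := by
      rw [Nat.support_factorization] at hp
      exact Nat.prime_of_mem_primeFactors hp
    exact pow_ne_zero _ (by exact_mod_cast hp2.pos.ne')

lemma ben_eq_sum (ρ : ℝ) (N M : ℕ) (hN : 0 < N) (hM : 0 < M) :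
    ben ρ N M = ∑ p ∈ (M*N).primeFactors,
      (gfun ρ p (M.factorization p) - gfun ρ p (N.factorization p)) := by
  have hMN : (M*N).primeFactors = M.primeFactors ∪ N.primeFactors :=
    Nat.primeFactors_mul hM.ne' hN.ne'
  have hMS : M.primeFactors ⊆ (M*N).primeFactors := by rw [hMN]; exact Finset.subset_union_left
  have hNS : N.primeFactors ⊆ (M*N).primeFactors := by rw [hMN]; exact Finset.subset_union_right
  rw [ben, ell_eq_sum _ M hMS, ell_eq_sum _ N hNS,
      log_eq_sum _ M hM hMS, log_eq_sum _ N hN hNS]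
  rw [← Finset.sum_sub_distrib, ← Finset.sum_sub_distrib, Finset.mul_sum, ← Finset.sum_sub_distrib]
  refine Finset.sum_congr rfl fun p hp => ?_
  simp only [gfun]
  ring

lemma gfun_min (ρ : ℝ) (k : ℕ) (p : ℕ) (hp : p.Prime)
    (h1 : 1 ≤ k ↔ (p : ℝ) / Real.log p < ρ)
    (h2 : ∀ i : ℕ, 2 ≤ i → (i ≤ k ↔ ((p:ℝ)^i - (p:ℝ)^(i-1)) / Real.log p < ρ)) :
    ∀ v, gfun ρ p k ≤ gfun ρ p v := by
  have hlog : 0 < Real.log p := Real.log_pos (by exact_mod_cast hp.one_lt)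
  have step_iff : ∀ i : ℕ, i + 1 ≤ k ↔ gfun ρ p (i+1) < gfun ρ p i := by
    intro i
    rcases Nat.eq_zero_or_pos i with hi | hi
    · subst hi
      rw [h1, div_lt_iff₀ hlog]
      simp only [gfun]
      norm_num
    · have h2' := h2 (i+1) (by omega)
      rw [div_lt_iff₀ hlog] at h2'
      rw [h2']
      have hi1 : i + 1 - 1 = i := by omega
      rw [hi1]
      simp only [gfun, if_neg (by omega : ¬ i + 1 = 0), if_neg (by omega : ¬ i = 0)]
      push_cast
      constructor <;> intro h <;> nlinarith
  have step_lt : ∀ i : ℕ, i + 1 ≤ k → gfun ρ p (i+1) ≤ gfun ρ p i :=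
    fun i h => le_of_lt ((step_iff i).mp h)
  have step_ge : ∀ i : ℕ, k ≤ i → gfun ρ p i ≤ gfun ρ p (i+1) := by
    intro i h
    by_contra hc
    push_neg at hc
    have := (step_iff i).mpr hc
    omega
  have above : ∀ d, gfun ρ p k ≤ gfun ρ p (k + d) := by
    intro d
    induction d with
    | zero => simp
    | succ d ih =>
      have := step_ge (k + d) (by omega)
      have he : k + (d + 1) = (k + d) + 1 := by omega
      rw [he]
      linarith
  have below : ∀ d, gfun ρ p k ≤ gfun ρ p (k - d) := by
    intro d
    induction d with
    | zero => simp
    | succ d ih =>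
      rcases le_or_gt k d with h | h
      · have he : k - (d+1) = k - d := by omega
        rw [he]; exact ih
      · have he : k - d = (k - (d+1)) + 1 := by omega
        have := step_lt (k - (d+1)) (by omega)
        rw [← he] at this
        linarith
  intro v
  rcases le_or_gt k v with h | h
  · have := above (v - k)
    rwa [Nat.add_sub_cancel' h] at this
  · have := below (k - v)
    rwa [Nat.sub_sub_self (le_of_lt h)] at this

lemma sq_log_mono {a b : ℝ} (ha : 1 < a) (hab : a ≤ b) :
    (a^2 - a) * Real.log b ≤ (b^2 - b) * Real.log a := by
  have ha0 : 0 < a := by linarith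
  have hloga : 0 < Real.log a := Real.log_pos ha
  have h1 : Real.log b - Real.log a ≤ b/a - 1 := by
    have := Real.log_le_sub_one_of_pos (div_pos (show (0:ℝ) < b by linarith) ha0)
    rwa [Real.log_div (show b ≠ 0 by intro h; rw [h] at hab; linarith) (show a ≠ 0 from ne_of_gt ha0)] at this
  have h2 : 1 - 1/a ≤ Real.log a := by
    have := Real.log_le_sub_one_of_pos (show (0:ℝ) < 1/a by positivity)
    rw [Real.log_div one_ne_zero (ne_of_gt ha0), Real.log_one] at this
    linarith
  have h1' : a * Real.log b ≤ a * Real.log a + (b - a) := by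
    have := mul_le_mul_of_nonneg_left h1 (le_of_lt ha0)
    rw [mul_sub] at this
    field_simp at this
    nlinarith
  have h2' : a - 1 ≤ a * Real.log a := by
    have := mul_le_mul_of_nonneg_left h2 (le_of_lt ha0)
    field_simp at this
    nlinarith
  have e1 : (a-1) * (a * Real.log b) ≤ (a-1) * (a * Real.log a + (b - a)) :=
    mul_le_mul_of_nonneg_left h1' (by linarith)
  have e2 : ((b-a)*(a+b-1)) * (a-1) ≤ ((b-a)*(a+b-1)) * (a * Real.log a) :=
    mul_le_mul_of_nonneg_left h2' (by nlinarith)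
  have key : a*(a-1)*(b-a) ≤ a*(b-a)*(a+b-1)*Real.log a := by
    nlinarith [e2, mul_nonneg (mul_nonneg (by linarith : (0:ℝ) ≤ a-1)
      (by linarith : (0:ℝ) ≤ b-a)) (by linarith : (0:ℝ) ≤ b-1)]
  have e1a := mul_le_mul_of_nonneg_left e1 ha0.le
  have goal_a : a*((a^2-a) * Real.log b) ≤ a*((b^2-b)*Real.log a) := by nlinarith [e1a, key]
  exact le_of_mul_le_mul_left goal_a ha0

theorem small_benefit_middle_primes_exponent_le_two (ρ x₁ x₂ : ℝ)
    (hρ : 5 / Real.log 5 ≤ ρ)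
    (hx₁e : Real.exp 1 ≤ x₁) (hx₁ : x₁ / Real.log x₁ = ρ)
    (hx₂1 : 1 < x₂) (hx₂ : (x₂ ^ 2 - x₂) / Real.log x₂ = ρ)
    (N : ℕ) (hN : 0 < N)
    (hNfac : ∀ p : ℕ, p.Prime →
      (1 ≤ N.factorization p ↔ (p : ℝ) / Real.log p < ρ) ∧
      (∀ i : ℕ, 2 ≤ i →
        (i ≤ N.factorization p ↔
          ((p : ℝ) ^ i - (p : ℝ) ^ (i - 1)) / Real.log p < ρ)))
    (M : ℕ) (hM : 0 < M)
    (hben : ben ρ N M < min (x₂ ^ 2 - 2 * x₂) (x₁ / 2 - Real.sqrt x₁)) :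
    ∀ p : ℕ, p.Prime → x₂ ≤ (p : ℝ) → (p : ℝ) < Real.sqrt x₁ →
      M.factorization p ≤ 2 := by
  intro q hq hqx₂ hqx₁
  by_contra hv
  push_neg at hv
  have hv3 : 3 ≤ M.factorization q := hv
  set v := M.factorization q with hvdef
  set k := N.factorization q with hkdef
  have hq1 : (1:ℝ) < q := by exact_mod_cast hq.one_lt
  have hq2 : (2:ℝ) ≤ q := by exact_mod_cast hq.two_le
  have hlogq : 0 < Real.log q := Real.log_pos hq1
  have hlogx₂ : 0 < Real.log x₂ := Real.log_pos hx₂1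
  have hlog5 : 0 < Real.log 5 := Real.log_pos (by norm_num)
  have hρ0 : 0 < ρ := lt_of_lt_of_le (by positivity) hρ
  -- F1 : ρ * log q ≤ q^2 - q
  have hx₂' : x₂ ^ 2 - x₂ = ρ * Real.log x₂ := by
    rw [← hx₂]; field_simp
  have hF1 : ρ * Real.log q ≤ (q:ℝ)^2 - (q:ℝ) := by
    have hm := sq_log_mono hx₂1 hqx₂
    rw [hx₂'] at hm
    have := (mul_le_mul_iff_left₀ hlogx₂).mp (by nlinarith : (ρ * Real.log q) * Real.log x₂ ≤ ((q:ℝ)^2 - q) * Real.log x₂)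
    exact this
  -- F2 : k ≤ 1
  have hk1 : k ≤ 1 := by
    by_contra hk2
    push_neg at hk2
    have h2 := ((hNfac q hq).2 2 le_rfl).mp (by omega)
    rw [div_lt_iff₀ hlogq] at h2
    norm_num at h2
    nlinarith
  -- gfun at k is small
  have hgk : gfun ρ q k ≤ (q:ℝ) := by
    interval_cases k
    · simp [gfun]
    · simp only [gfun]
      norm_num
      nlinarith [mul_pos hρ0 hlogq]
  -- gfun at v is big
  have hg3 : ∀ w, 3 ≤ w → (q:ℝ)^3 - 3*(ρ * Real.log q) ≤ gfun ρ q w := by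
    intro w hw
    induction w, hw using Nat.le_induction with
    | base => simp only [gfun]; norm_num; ring_nf; linarith
    | succ w hw ih =>
      have hqw : (q:ℝ)^1 ≤ (q:ℝ)^w := pow_le_pow_right₀ (by linarith) (by omega)
      have hstep : gfun ρ q w ≤ gfun ρ q (w+1) := by
        simp only [gfun, if_neg (by omega : ¬ w = 0), if_neg (by omega : ¬ w + 1 = 0)]
        push_cast
        have : (q:ℝ)^(w+1) = (q:ℝ)^w * q := by ring
        nlinarith
      linarith
  -- benefit decomposition
  have hdec := ben_eq_sum ρ N M hN hM
  have hnonneg : ∀ p ∈ (M*N).primeFactors,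
      0 ≤ gfun ρ p (M.factorization p) - gfun ρ p (N.factorization p) := by
    intro p hp
    have hpp := Nat.prime_of_mem_primeFactors hp
    have := gfun_min ρ (N.factorization p) p hpp (hNfac p hpp).1 (hNfac p hpp).2 (M.factorization p)
    linarith
  have hqmem : q ∈ (M*N).primeFactors := by
    rw [Nat.mem_primeFactors]
    refine ⟨hq, Dvd.dvd.mul_right ?_ N, by positivity⟩
    exact Nat.dvd_of_factorization_pos (by omega)
  have hsingle : gfun ρ q v - gfun ρ q k ≤ ben ρ N M := by
    rw [hdec]
    exact Finset.single_le_sum hnonneg hqmem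
  have hgv := hg3 v hv3
  -- final numeric chain
  have hchain : x₂^2 - 2*x₂ ≤ gfun ρ q v - gfun ρ q k := by
    have h : (q:ℝ)^3 - 3*((q:ℝ)^2 - q) - q ≤ gfun ρ q v - gfun ρ q k := by
      linarith
    nlinarith [h, mul_nonneg (by linarith : (0:ℝ) ≤ (q:ℝ)-x₂) (by linarith : (0:ℝ) ≤ (q:ℝ)+x₂-2),
      mul_nonneg (mul_nonneg (by linarith : (0:ℝ) ≤ (q:ℝ)) (by linarith : (0:ℝ) ≤ (q:ℝ)-2))
        (by linarith : (0:ℝ) ≤ (q:ℝ)-2)]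
  have hmin : min (x₂ ^ 2 - 2 * x₂) (x₁ / 2 - Real.sqrt x₁) ≤ x₂^2 - 2*x₂ := min_le_left _ _
  linarith
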